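/- Let e = w_σ w_τ be an edge of Gallai's graph G_K joining two type-(V3) vertices. Then G_K − e admits a proper (d+1)-colouring. -/

import Mathlib

open Geometry

/-- A (finite) triangulation of the `d`-simplex: a finite geometric simplicial
complex in `ℝ^d` whose underlying space is the convex hull of `d+1` affinely
independent points (the corners of `Δ^d`). -/
structure SimplexTriangulation (d : ℕ) where
  K : Geometry.SimplicialComplex ℝ (EuclideanSpace ℝ (Fin d))
  corner : Fin (d + 1) → EuclideanSpace ℝ (Fin d)
  indep : AffineIndependent ℝ corner
  finite : K.faces.Finite
  space_eq : K.space = convexHull ℝ (Set.range corner)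

namespace SimplexTriangulation

variable {d : ℕ}

/-- Facets of the triangulation: faces with `d+1` vertices (i.e. `d`-simplices). -/
def IsFacet (T : SimplexTriangulation d) (σ : Finset (EuclideanSpace ℝ (Fin d))) : Prop :=
  σ ∈ T.K.faces ∧ σ.card = d + 1

/-- A Sperner labelling: each corner `vᵢ` of `Δ^d` gets label `i`, and any vertex
of the triangulation lying in a face of `Δ^d` (the convex hull of a set of
corners) gets the label of one of the corners of that face. -/
def IsSperner (T : SimplexTriangulation d)
    (l : EuclideanSpace ℝ (Fin d) → Fin (d + 1)) : Prop :=
  (∀ i, l (T.corner i) = i) ∧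
  ∀ x ∈ T.K.vertices, ∀ s : Set (Fin (d + 1)),
    x ∈ convexHull ℝ (T.corner '' s) → ∃ i ∈ s, l x = i

end SimplexTriangulation

/-- A simplex is rainbow when the labelling is injective on its vertices. -/
def Rainbow {α : Type*} {m : ℕ} (l : α → Fin m) (σ : Finset α) : Prop :=
  Set.InjOn l ↑σ

namespace SimplexTriangulation

variable {d : ℕ}

/-- Vertices of Gallai's graph `G_K`: (V1) vertices of `K`, (V2) a vertex `v_ρ`
for each facet `ρ` of `K`, (V3) a vertex `w_σ` for each of the `d+1` facets of
`Δ^d` (indexed by the opposite corner). -/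
def GallaiVertex (T : SimplexTriangulation d) : Type :=
  ↥T.K.vertices ⊕ {σ // T.IsFacet σ} ⊕ Fin (d + 1)

/-- The generating relation of Gallai's graph: `u ∼ v_ρ` when `u ∈ ρ`;
`u ∼ w_j` when `u` lies in the facet of `Δ^d` opposite to corner `j`;
and all pairs of type-(V3) vertices are adjacent. -/
def gallaiRel (T : SimplexTriangulation d) :
    T.GallaiVertex → T.GallaiVertex → Prop
  | Sum.inl u, Sum.inr (Sum.inl ρ) => (u : EuclideanSpace ℝ (Fin d)) ∈ ρ.1
  | Sum.inl u, Sum.inr (Sum.inr j) =>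
      (u : EuclideanSpace ℝ (Fin d)) ∈ convexHull ℝ (T.corner '' {i | i ≠ j})
  | Sum.inr (Sum.inr _), Sum.inr (Sum.inr _) => True
  | _, _ => False

/-- Gallai's graph `G_K` associated with a triangulation `K` of `Δ^d`. -/
def GallaiGraph (T : SimplexTriangulation d) : SimpleGraph T.GallaiVertex :=
  SimpleGraph.fromRel (gallaiRel T)

end SimplexTriangulation

/-- Deleting an edge of `G_K` joining two type-(V3) vertices `w_σ w_τ` leaves a
`(d+1)`-colourable graph. -/
theorem gallai_deleteV3Edge_colorable {d : ℕ} (T : SimplexTriangulation d)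
    (j j' : Fin (d + 1)) (hjj' : j ≠ j')
    (he : (T.GallaiGraph).Adj (Sum.inr (Sum.inr j)) (Sum.inr (Sum.inr j'))) :
    ((T.GallaiGraph).deleteEdges
        {s(Sum.inr (Sum.inr j), Sum.inr (Sum.inr j'))}).Colorable (d + 1) := by
  classical
  set c : Fin (d + 1) → Fin (d + 1) :=
    fun k => Equiv.swap j' (Fin.last d) (if k = j' then j else k) with hc
  have hc_ne : ∀ k, c k ≠ Fin.last d := by
    intro k h
    rw [hc] at h
    simp only at h
    rw [Equiv.swap_apply_eq_iff, Equiv.swap_apply_right] at h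
    split_ifs at h with hk
    · exact hjj' h
    · exact hk h
  have hc_inj : ∀ k m : Fin (d + 1), c k = c m →
      (if k = j' then j else k) = (if m = j' then j else m) := by
    intro k m h
    exact (Equiv.swap j' (Fin.last d)).injective h
  refine ⟨SimpleGraph.Coloring.mk
    (fun v : T.GallaiVertex =>
      match v with
      | Sum.inl _ => Fin.last d
      | Sum.inr (Sum.inl _) => c j
      | Sum.inr (Sum.inr k) => c k) ?_⟩
  intro a b hab
  rw [SimpleGraph.deleteEdges_adj] at hab
  obtain ⟨hadj, hne⟩ := hab
  have hadj' := hadj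
  rw [SimplexTriangulation.GallaiGraph, SimpleGraph.fromRel_adj] at hadj'
  obtain ⟨hab0, hrel⟩ := hadj'
  cases a with
  | inl u =>
    cases b with
    | inl u' => simp [SimplexTriangulation.gallaiRel] at hrel
    | inr b' =>
      cases b' with
      | inl ρ => exact fun h => hc_ne j h.symm
      | inr k => exact fun h => hc_ne k h.symm
  | inr a' =>
    cases a' with
    | inl ρ =>
      cases b with
      | inl u => exact hc_ne j
      | inr b' =>
        cases b' with
        | inl ρ' => simp [SimplexTriangulation.gallaiRel] at hrel
        | inr k => simp [SimplexTriangulation.gallaiRel] at hrel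
    | inr k =>
      cases b with
      | inl u => exact hc_ne k
      | inr b' =>
        cases b' with
        | inl ρ' => simp [SimplexTriangulation.gallaiRel] at hrel
        | inr m =>
          have hkm : k ≠ m := by
            intro h; exact hab0 (by rw [h])
          intro h
          have h2 := hc_inj k m h
          apply hne
          refine Set.mem_singleton_iff.mpr ?_
          refine Sym2.eq_iff.mpr ?_
          split_ifs at h2 with h3 h4 h4
          · exact absurd (h3.trans h4.symm) hkm
          · right
            subst h3; rw [← h2]
            exact ⟨rfl, rfl⟩
          · left
            subst h4; rw [← h2]
            exact ⟨rfl, rfl⟩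
          · exact absurd h2 hkm
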